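/- For every integer n ≥ 2, the total number of levels over all compositions of n with parts in ℕ⁺ (all positive integers allowed as parts) satisfies 9 · ∑_{σ∈C_n^{ℕ⁺}} levels(σ) = 2^{n−2}·(3n+1) + 2·(−1)^{n}, as an identity of integers. -/
import Mathlib


/-- Number of levels of a list (adjacent equal pairs). -/
def levelsL (l : List ℕ) : ℕ := (l.zip l.tail).countP (fun p => decide (p.1 = p.2))


def compFinset : ℕ → Finset (List ℕ)
  | 0 => {[]}
  | n+1 => (Finset.range (n+1)).attach.biUnion
      (fun m => (compFinset m.1).image (fun l => (n+1-m.1) :: l))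
  decreasing_by exact Finset.mem_range.mp m.2

lemma mem_compFinset : ∀ (n : ℕ) (l : List ℕ),
    l ∈ compFinset n ↔ (∀ x ∈ l, 0 < x) ∧ l.sum = n := by
  intro n
  induction n using Nat.strong_induction_on with
  | _ n ih =>
    intro l
    cases n with
    | zero =>
      rw [compFinset]
      simp only [Finset.mem_singleton]
      constructor
      · rintro rfl; simp
      · rintro ⟨h1, h2⟩
        cases l with
        | nil => rfl
        | cons a t =>
          exfalso; have := h1 a (by simp); simp at h2; omega
    | succ n =>
      rw [compFinset]
      simp only [Finset.mem_biUnion, Finset.mem_attach, Finset.mem_image, true_and]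
      constructor
      · rintro ⟨⟨m, hm⟩, t, ht, rfl⟩
        have hm' := Finset.mem_range.mp hm
        obtain ⟨hp, hs⟩ := (ih m hm' t).mp ht
        refine ⟨?_, ?_⟩
        · intro x hx
          rcases List.mem_cons.mp hx with rfl | hx
          · show 0 < n + 1 - m
            omega
          · exact hp x hx
        · show (n + 1 - m) + t.sum = n + 1
          omega
      · rintro ⟨h1, h2⟩
        cases l with
        | nil => simp at h2
        | cons a t =>
          have ha : 0 < a := h1 a (by simp)
          have hs : a + t.sum = n + 1 := by simpa using h2
          have hmlt : n + 1 - a < n + 1 := by omega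
          refine ⟨⟨n + 1 - a, Finset.mem_range.mpr hmlt⟩, t,
            (ih (n + 1 - a) hmlt t).mpr ⟨fun x hx => h1 x (by simp [hx]), by omega⟩, ?_⟩
          show (n + 1 - (n + 1 - a)) :: t = a :: t
          congr 1
          omega

lemma compFinset_succ (n : ℕ) :
    compFinset (n+1) = (Finset.range (n+1)).biUnion
      (fun m => (compFinset m).image (fun l => (n+1-m) :: l)) := by
  ext l
  rw [mem_compFinset]
  simp only [Finset.mem_biUnion, Finset.mem_range, Finset.mem_image]
  constructor
  · rintro ⟨h1, h2⟩
    cases l with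
    | nil => simp at h2
    | cons a t =>
      have ha : 0 < a := h1 a (by simp)
      have hs : a + t.sum = n + 1 := by simpa using h2
      refine ⟨n + 1 - a, by omega, t,
        (mem_compFinset _ t).mpr ⟨fun x hx => h1 x (by simp [hx]), by omega⟩, ?_⟩
      congr 1
      omega
  · rintro ⟨m, hm, t, ht, rfl⟩
    obtain ⟨hp, hs⟩ := (mem_compFinset _ t).mp ht
    refine ⟨?_, ?_⟩
    · intro x hx
      rcases List.mem_cons.mp hx with rfl | hx
      · omega
      · exact hp x hx
    · simp [hs]
      omega

lemma sum_compFinset_succ (g : List ℕ → ℤ) (n : ℕ) :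
    ∑ l ∈ compFinset (n+1), g l
      = ∑ m ∈ Finset.range (n+1), ∑ t ∈ compFinset m, g ((n+1-m) :: t) := by
  rw [compFinset_succ, Finset.sum_biUnion]
  · refine Finset.sum_congr rfl fun m hm => ?_
    rw [Finset.sum_image]
    intro x _ y _ h
    exact (List.cons.injEq _ _ _ _ ▸ h).2
  · intro m₁ h₁ m₂ h₂ hne
    simp only [Finset.mem_coe, Finset.mem_range] at h₁ h₂
    refine Finset.disjoint_left.mpr ?_
    rintro l hl₁ hl₂
    simp only [Finset.mem_image] at hl₁ hl₂
    obtain ⟨t₁, _, rfl⟩ := hl₁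
    obtain ⟨t₂, _, he⟩ := hl₂
    have : n + 1 - m₂ = n + 1 - m₁ := (List.cons.injEq _ _ _ _ ▸ he).1
    exact hne (by omega)

lemma levelsL_cons (k : ℕ) (l : List ℕ) :
    levelsL (k :: l) = levelsL l + (if l.head? = some k then 1 else 0) := by
  cases l with
  | nil => simp [levelsL]
  | cons a t =>
    simp only [levelsL, List.tail_cons, List.zip_cons_cons, List.countP_cons, List.head?_cons]
    by_cases h : a = k
    · simp [h, Nat.add_comm]
    · have h2 : ¬ k = a := fun hh => h hh.symm
      simp [h, h2]

noncomputable def Kc (n : ℕ) : ℤ := ((compFinset n).card : ℤ)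

noncomputable def Sc (n : ℕ) : ℤ := ∑ l ∈ compFinset n, (levelsL l : ℤ)

noncomputable def Bc (N : ℕ) : ℤ :=
  ∑ m ∈ Finset.range N, if N - m ≤ m then Kc (m - (N - m)) else 0

lemma Kc_zero : Kc 0 = 1 := by
  rw [Kc, compFinset]
  simp

lemma Kc_succ (n : ℕ) : Kc (n+1) = ∑ m ∈ Finset.range (n+1), Kc m := by
  have h := sum_compFinset_succ (fun _ => (1 : ℤ)) n
  simp only [Finset.sum_const, nsmul_eq_mul, mul_one] at h
  simp only [Kc]
  exact h

lemma Kc_sum (n : ℕ) : ∑ m ∈ Finset.range (n+1), Kc m = 2 ^ n := by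
  induction n with
  | zero => simp [Kc_zero]
  | succ n ih =>
    rw [Finset.sum_range_succ, ih, Kc_succ, ih]
    ring

lemma Kc_eq (n : ℕ) : Kc (n+1) = 2 ^ n := by
  rw [Kc_succ, Kc_sum]

lemma head_count (m k : ℕ) (hk : 1 ≤ k) :
    (∑ t ∈ compFinset m, if t.head? = some k then (1:ℤ) else 0)
      = if k ≤ m then Kc (m - k) else 0 := by
  rw [Finset.sum_boole]
  by_cases hkm : k ≤ m
  · rw [if_pos hkm]
    have himg : (compFinset m).filter (fun l => l.head? = some k)
        = (compFinset (m - k)).image (fun l => k :: l) := by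
      ext l
      simp only [Finset.mem_filter, Finset.mem_image, mem_compFinset]
      constructor
      · rintro ⟨⟨h1, h2⟩, h3⟩
        cases l with
        | nil => simp at h3
        | cons a t =>
          simp only [List.head?_cons, Option.some.injEq] at h3
          subst h3
          exact ⟨t, ⟨fun x hx => h1 x (by simp [hx]), by simp at h2; omega⟩, rfl⟩
      · rintro ⟨t, ⟨h1, h2⟩, rfl⟩
        refine ⟨⟨?_, ?_⟩, rfl⟩
        · intro x hx
          rcases List.mem_cons.mp hx with rfl | hx
          · omega
          · exact h1 x hx
        · simp [h2]; omega
    rw [himg, Finset.card_image_of_injective _ (fun x y h => (List.cons.injEq _ _ _ _ ▸ h).2),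
      Kc]
  · rw [if_neg hkm]
    have : (compFinset m).filter (fun l => l.head? = some k) = ∅ := by
      ext l
      simp only [Finset.mem_filter, mem_compFinset, Finset.notMem_empty, iff_false]
      rintro ⟨⟨h1, h2⟩, h3⟩
      cases l with
      | nil => simp at h3
      | cons a t =>
        simp only [List.head?_cons, Option.some.injEq] at h3
        subst h3
        simp at h2
        omega
    rw [this]
    simp

lemma Sc_succ (n : ℕ) : Sc (n+1) = (∑ m ∈ Finset.range (n+1), Sc m) + Bc (n+1) := by
  rw [Sc, sum_compFinset_succ (fun l => (levelsL l : ℤ))]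
  have key : ∀ m ∈ Finset.range (n+1),
      (∑ t ∈ compFinset m, ((levelsL ((n+1-m) :: t) : ℤ)))
        = Sc m + (if (n+1) - m ≤ m then Kc (m - ((n+1) - m)) else 0) := by
    intro m hm
    have : ∀ t : List ℕ, ((levelsL ((n+1-m) :: t) : ℤ))
        = (levelsL t : ℤ) + (if t.head? = some (n+1-m) then (1:ℤ) else 0) := by
      intro t
      rw [levelsL_cons]
      push_cast
      split <;> simp
    rw [Finset.sum_congr rfl (fun t _ => this t), Finset.sum_add_distrib]
    have := Finset.mem_range.mp hm
    rw [head_count m (n+1-m) (by omega)]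
    rfl
  rw [Finset.sum_congr rfl key, Finset.sum_add_distrib, Bc]

lemma Bc_step (N : ℕ) : Bc (N+2) = Bc N + Kc N := by
  rw [Bc, Finset.sum_range_succ', if_neg (by omega)]
  rw [show (∑ m ∈ Finset.range (N+1),
      if (N+2) - (m+1) ≤ m+1 then Kc ((m+1) - ((N+2) - (m+1))) else 0)
    = ∑ m ∈ Finset.range (N+1), (if N - m ≤ m then Kc (m - (N - m)) else 0) from
      Finset.sum_congr rfl fun m hm => by
        have := Finset.mem_range.mp hm
        by_cases h : N - m ≤ m
        · rw [if_pos (by omega), if_pos h]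
          congr 1
          omega
        · rw [if_neg (by omega), if_neg h]]
  rw [Finset.sum_range_succ, if_pos (by omega)]
  rw [Bc, Nat.sub_self, Nat.sub_zero]
  ring

lemma Bc_one : Bc 1 = 0 := by
  simp [Bc]

lemma Bc_two : Bc 2 = 1 := by
  rw [Bc]
  rw [Finset.sum_range_succ, Finset.sum_range_one]
  norm_num [Kc_zero]

lemma Bc_three : Bc 3 = 1 := by
  rw [show (3:ℕ) = 1 + 2 from rfl, Bc_step, Bc_one, Kc_eq]
  norm_num

lemma Bc_closed (m : ℕ) : 3 * Bc (m + 2) = 2 ^ (m+1) + (-1 : ℤ) ^ m := by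
  induction m using Nat.twoStepInduction with
  | zero => simp [Bc_two]
  | one => simp [Bc_three]
  | more m ih _ =>
    rw [show m + 2 + 2 = (m + 2) + 2 from rfl, Bc_step, Kc_eq]
    rw [mul_add, ih]
    ring

lemma Sc_zero : Sc 0 = 0 := by
  rw [Sc, compFinset]
  simp [levelsL]

lemma Sc_one : Sc 1 = 0 := by
  have h := Sc_succ 0
  simpa [Sc_zero, Bc_one] using h

lemma Sc_two : Sc 2 = 1 := by
  have h := Sc_succ 1
  rw [Finset.sum_range_succ, Finset.sum_range_one, Sc_zero, Sc_one, Bc_two] at h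
  simpa using h

lemma Sc_rec (k : ℕ) : Sc (k+2) = 2 * Sc (k+1) + Bc (k+2) - Bc (k+1) := by
  have h1 := Sc_succ (k+1)
  have h2 := Sc_succ k
  rw [Finset.sum_range_succ] at h1
  linarith

lemma Sc_closed (m : ℕ) :
    9 * Sc (m+2) = 2 ^ m * (3 * ((m : ℤ)+2) + 1) + 2 * (-1 : ℤ) ^ m := by
  induction m with
  | zero => simp [Sc_two]
  | succ m ih =>
    have hr := Sc_rec (m+1)
    have hb1 := Bc_closed (m+1)
    have hb2 := Bc_closed m
    rw [show m + 1 + 1 = m + 2 from rfl] at hr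
    push_cast
    linear_combination 9 * hr + 2 * ih + 3 * hb1 - 3 * hb2

lemma sum_comp (n : ℕ) (f : List ℕ → ℤ) :
    ∑ c : Composition n, f c.blocks = ∑ l ∈ compFinset n, f l := by
  refine Finset.sum_bij (fun c _ => c.blocks) ?_ ?_ ?_ ?_
  · intro c _
    exact (mem_compFinset n c.blocks).mpr ⟨fun x hx => c.blocks_pos hx, c.blocks_sum⟩
  · intro c _ d _ h
    cases c; cases d; simpa using h
  · intro l hl
    obtain ⟨h1, h2⟩ := (mem_compFinset n l).mp hl
    exact ⟨⟨l, fun hx => h1 _ hx, h2⟩, Finset.mem_univ _, rfl⟩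
  · intro c _
    rfl

theorem stmt8 (n : ℕ) (hn : 2 ≤ n) :
    (9 : ℤ) * ∑ c : Composition n, (levelsL c.blocks : ℤ)
      = 2 ^ (n - 2) * (3 * (n : ℤ) + 1) + 2 * (-1) ^ n := by
  obtain ⟨m, rfl⟩ : ∃ m, n = m + 2 := ⟨n - 2, by omega⟩
  rw [sum_comp (m+2) (fun l => (levelsL l : ℤ))]
  have h : (∑ l ∈ compFinset (m+2), (levelsL l : ℤ)) = Sc (m+2) := rfl
  rw [h, Sc_closed m, Nat.add_sub_cancel]
  push_cast
  ring
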